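/- Name substitution preserves well-formedness: if a generic signature name gn is well-formed in an SCE sce, every type-variable occurrence of gn belongs to the sequence V̄ of distinct type variables, and TN̄ is a sequence of ground signature names each well-formed in sce with #TN̄ = #V̄, then {V̄ ↦ TN̄}gn is a ground signature name that is well-formed in sce. -/

import Mathlib

/-- Type names: either a type variable (from `X`) or a generic signature name,
i.e. a signature constructor name (from `N`) applied to a list of type names. -/
inductive TName (N X : Type) : Type
  | var : X → TName N X
  | gen : N → List (TName N X) → TName N X

/-- Occurrence of the type variable `y` in a type name. -/
inductive Occurs {N X : Type} (y : X) : TName N X → Prop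
  | var : Occurs y (TName.var y)
  | arg {nm : N} {args : List (TName N X)} {t : TName N X} :
      t ∈ args → Occurs y t → Occurs y (TName.gen nm args)

/-- Ground signature names: generic signature names containing no type variables. -/
inductive IsGround {N X : Type} : TName N X → Prop
  | gen {nm : N} {args : List (TName N X)} :
      (∀ t ∈ args, IsGround t) → IsGround (TName.gen nm args)

/-- Occurrence of the signature constructor name `n` (as the head of some
generic signature name) inside a type name. -/
inductive NameOccurs {N X : Type} (n : N) : TName N X → Prop
  | head {args : List (TName N X)} : NameOccurs n (TName.gen n args)
  | arg {nm : N} {args : List (TName N X)} {t : TName N X} :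
      t ∈ args → NameOccurs n t → NameOccurs n (TName.gen nm args)

/-- The outermost name (head) of a type name, if any. -/
def TName.head? {N X : Type} : TName N X → Option N
  | .var _ => none
  | .gen nm _ => some nm

/-- Name substitution `{V̄ ↦ TN̄}`: a type variable in `V` is mapped to the
element of `TN` at the corresponding position, other variables are left
unchanged, and substitution acts homomorphically on generic signature names. -/
def substT {N X : Type} [DecidableEq X] (V : List X) (TN : List (TName N X)) :
    TName N X → TName N X
  | .var y =>
      match (V.zip TN).lookup y with
      | some t => t
      | none => .var y
  | .gen nm args => .gen nm (args.attach.map fun t => substT V TN t.1)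
decreasing_by
  simp_wf
  have := List.sizeOf_lt_of_mem t.2
  omega

/-- A signature constructor: a name, a list of (distinct) type variables,
supersignatures, field signatures and method signatures. -/
structure SigCon (N X L : Type) where
  name : N
  tvars : List X
  supers : List (TName N X)
  fields : List (L × TName N X)
  methods : List (L × List (TName N X) × TName N X)

/-- A signature constructor environment: a (finite) map from names to
signature constructors. -/
abbrev SCE (N X L : Type) := N → Option (SigCon N X L)

/-- Well-formedness of a type name in an SCE: each signature constructor name
used is bound in the environment and applied to the declared number of type
arguments, recursively. -/
inductive WFT {N X L : Type} (sce : SCE N X L) : TName N X → Prop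
  | var (y : X) : WFT sce (TName.var y)
  | gen {nm : N} {args : List (TName N X)} (sc : SigCon N X L) :
      sce nm = some sc → args.length = sc.tvars.length →
      (∀ t ∈ args, WFT sce t) → WFT sce (TName.gen nm args)

/-- The type variable `y` occurs somewhere in the signature constructor `sc`. -/
def OccursInSC {N X L : Type} (y : X) (sc : SigCon N X L) : Prop :=
  (∃ s ∈ sc.supers, Occurs y s) ∨ (∃ f ∈ sc.fields, Occurs y f.2) ∨
    (∃ m ∈ sc.methods, (∃ a ∈ m.2.1, Occurs y a) ∨ Occurs y m.2.2)

/-- The signature constructor name `n` is referenced somewhere inside `sc`. -/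
def NameInSC {N X L : Type} (n : N) (sc : SigCon N X L) : Prop :=
  (∃ s ∈ sc.supers, NameOccurs n s) ∨ (∃ f ∈ sc.fields, NameOccurs n f.2) ∨
    (∃ m ∈ sc.methods, (∃ a ∈ m.2.1, NameOccurs n a) ∨ NameOccurs n m.2.2)

/-- All type names occurring in the components of `sc` are well-formed in `sce`. -/
def WFSC {N X L : Type} (sce : SCE N X L) (sc : SigCon N X L) : Prop :=
  (∀ s ∈ sc.supers, WFT sce s) ∧ (∀ f ∈ sc.fields, WFT sce f.2) ∧
    (∀ m ∈ sc.methods, (∀ a ∈ m.2.1, WFT sce a) ∧ WFT sce m.2.2)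

/-- The "direct supersignature" relation on names induced by an SCE:
`SuperRel sce n m` iff `m` is the head of one of the supersignatures of the
constructor bound to `n`. -/
def SuperRel {N X L : Type} (sce : SCE N X L) (n m : N) : Prop :=
  ∃ sc, sce n = some sc ∧ ∃ s ∈ sc.supers, s.head? = some m

/-- Every member (field or method) a constructor shares (same label) with an
instantiation of one of its supersignature constructors has exactly the same
signature as in that instantiation. -/
def MemberMatch {N X L : Type} [DecidableEq X] (sce : SCE N X L) : Prop :=
  ∀ n sc, sce n = some sc →
    ∀ (snm : N) (sargs : List (TName N X)), TName.gen snm sargs ∈ sc.supers →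
      ∀ ssc, sce snm = some ssc →
        (∀ (l : L) (t t' : TName N X), (l, t) ∈ sc.fields → (l, t') ∈ ssc.fields →
          t = substT ssc.tvars sargs t') ∧
        (∀ (l : L) (as_ : List (TName N X)) (r : TName N X)
            (as' : List (TName N X)) (r' : TName N X),
          (l, as_, r) ∈ sc.methods → (l, as', r') ∈ ssc.methods →
          as_ = as'.map (substT ssc.tvars sargs) ∧ r = substT ssc.tvars sargs r')

/-- Well-formedness of a signature constructor environment. -/
structure WFSCE {N X L : Type} [DecidableEq X] (sce : SCE N X L) : Prop where
  finite : Set.Finite {n | (sce n).isSome}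
  namesMatch : ∀ n sc, sce n = some sc → sc.name = n
  tvarsNodup : ∀ n sc, sce n = some sc → sc.tvars.Nodup
  refsClosed : ∀ n sc, sce n = some sc → ∀ m, NameInSC m sc → (sce m).isSome
  wfNames : ∀ n sc, sce n = some sc → WFSC sce sc
  tvarsDecl : ∀ n sc, sce n = some sc → ∀ y, OccursInSC y sc → y ∈ sc.tvars
  noNakedSuper : ∀ n sc, sce n = some sc → ∀ s ∈ sc.supers, ∀ y : X, s ≠ TName.var y
  acyclic : ∀ n, ¬ Relation.TransGen (SuperRel sce) n n
  memberMatch : MemberMatch sce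

/-- `s` is a direct ground supersignature name of `g` in `sce`. -/
def DirectSuper {N X L : Type} [DecidableEq X] (sce : SCE N X L)
    (g s : TName N X) : Prop :=
  ∃ (nm : N) (args : List (TName N X)) (sc : SigCon N X L),
    g = TName.gen nm args ∧ sce nm = some sc ∧
      ∃ t ∈ sc.supers, s = substT sc.tvars args t

/-- `gss sce g`: the set of all ground supersignature names of `g`, obtained by
transitively taking direct ground supersignature names. -/
def gss {N X L : Type} [DecidableEq X] (sce : SCE N X L) (g : TName N X) :
    Set (TName N X) :=
  {s | Relation.TransGen (DirectSuper sce) g s}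

/-- `SCEExt sce' sce`: the environment `sce'` extends `sce` (as finite maps). -/
def SCEExt {N X L : Type} (sce' sce : SCE N X L) : Prop :=
  ∀ n sc, sce n = some sc → sce' n = some sc

/-- Subsigning of generic object signatures: `Subsign gos2 gos1` (gos2 ⊴ gos1). -/
def Subsign {N X L : Type} [DecidableEq X]
    (gos2 gos1 : TName N X × SCE N X L) : Prop :=
  SCEExt gos2.2 gos1.2 ∧ (gos2.1 = gos1.1 ∨ gos1.1 ∈ gss gos2.2 gos2.1)

/-- A well-formed generic object signature: a ground signature name
well-formed in a well-formed SCE. -/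
def WFGOS {N X L : Type} [DecidableEq X] (gos : TName N X × SCE N X L) : Prop :=
  WFSCE gos.2 ∧ WFT gos.2 gos.1 ∧ IsGround gos.1

/-- A (candidate) ground signature: a quadruple of a name, supersignature
names, field signatures and method signatures (type-name components). -/
structure GSig (N X L : Type) where
  name : TName N X
  supers : List (TName N X)
  fields : List (L × TName N X)
  methods : List (L × List (TName N X) × TName N X)

/-- `gs` is a ground signature: all its components are ground signature names. -/
def GSig.IsGroundSig {N X L : Type} (gs : GSig N X L) : Prop :=
  IsGround gs.name ∧ (∀ s ∈ gs.supers, IsGround s) ∧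
    (∀ f ∈ gs.fields, IsGround f.2) ∧
    (∀ m ∈ gs.methods, (∀ a ∈ m.2.1, IsGround a) ∧ IsGround m.2.2)

/-- `GenToGnd`: instantiating the signature constructor `sc` with the type
arguments `args`, taking `(nm, args)` as the name of the result. -/
def genToGnd {N X L : Type} [DecidableEq X] (nm : N) (args : List (TName N X))
    (sc : SigCon N X L) : GSig N X L where
  name := TName.gen nm args
  supers := sc.supers.map (substT sc.tvars args)
  fields := sc.fields.map fun f => (f.1, substT sc.tvars args f.2)
  methods := sc.methods.map fun m =>
    (m.1, m.2.1.map (substT sc.tvars args), substT sc.tvars args m.2.2)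

/-- The inductively defined set `GGN = N × GGN*` of ground signature names. -/
inductive GGN (N : Type) : Type
  | node : N → List (GGN N) → GGN N

/-- The canonical interpretation of a ground signature name as a generic
signature name. -/
def GGN.toTName {N X : Type} : GGN N → TName N X
  | .node nm args => TName.gen nm (args.attach.map fun a => a.1.toTName)
decreasing_by
  simp_wf
  have := List.sizeOf_lt_of_mem a.2
  omega

/-- The outermost name of a ground signature name (its erasure). -/
def GGN.headName {N : Type} : GGN N → N
  | .node nm _ => nm

/-- A (non-generic) NOOP signature. -/
structure NSig (N L : Type) where
  name : N
  supers : List N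
  fields : List (L × N)
  methods : List (L × List N × N)

/-- A NOOP signature environment. -/
abbrev NEnv (N L : Type) := N → Option (NSig N L)

/-- The name `m` is referenced inside the NOOP signature `s`. -/
def NameInNSig {N L : Type} (m : N) (s : NSig N L) : Prop :=
  m ∈ s.supers ∨ (∃ f ∈ s.fields, f.2 = m) ∨
    (∃ mm ∈ s.methods, m ∈ mm.2.1 ∨ mm.2.2 = m)

/-- The direct supersignature relation on names induced by a NOOP environment. -/
def NSuperRel {N L : Type} (env : NEnv N L) (n m : N) : Prop :=
  ∃ s, env n = some s ∧ m ∈ s.supers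

/-- Well-formedness of a NOOP signature environment. -/
structure WFNEnv {N L : Type} (env : NEnv N L) : Prop where
  finite : Set.Finite {n | (env n).isSome}
  namesMatch : ∀ n s, env n = some s → s.name = n
  refsClosed : ∀ n s, env n = some s → ∀ m, NameInNSig m s → (env m).isSome
  acyclic : ∀ n, ¬ Relation.TransGen (NSuperRel env) n n
  memberMatch : ∀ n s, env n = some s → ∀ m ∈ s.supers, ∀ ss, env m = some ss →
    (∀ (l : L) (t t' : N), (l, t) ∈ s.fields → (l, t') ∈ ss.fields → t = t') ∧
    (∀ (l : L) (as_ : List N) (r : N) (as' : List N) (r' : N),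
      (l, as_, r) ∈ s.methods → (l, as', r') ∈ ss.methods → as_ = as' ∧ r = r')

/-- Erasure of a type name: a naked type variable erases to `Object`, a generic
signature name erases to its outermost name. -/
def eraseT {N X : Type} (Object : N) : TName N X → N
  | .var _ => Object
  | .gen nm _ => nm

/-- Erasure of a signature constructor to a NOOP signature. -/
def eraseSC {N X L : Type} (Object : N) (sc : SigCon N X L) : NSig N L where
  name := sc.name
  supers := sc.supers.map (eraseT Object)
  fields := sc.fields.map fun f => (f.1, eraseT Object f.2)
  methods := sc.methods.map fun m =>
    (m.1, m.2.1.map (eraseT Object), eraseT Object m.2.2)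

/-- Erasure of a signature constructor environment. -/
def eraseSCE {N X L : Type} (Object : N) (sce : SCE N X L) : NEnv N L :=
  fun n => (sce n).map (eraseSC Object)


lemma lookup_zip_mem {X N : Type} [DecidableEq X] {V : List X} {TN : List (TName N X)}
    {y : X} (hy : y ∈ V) (hlen : TN.length = V.length) :
    ∃ t ∈ TN, (V.zip TN).lookup y = some t := by
  induction V generalizing TN with
  | nil => simp at hy
  | cons v V ih =>
    cases TN with
    | nil => simp at hlen
    | cons t TN =>
      by_cases h : y = v
      · exact ⟨t, by simp, by simp [List.lookup, h]⟩
      · rcases List.mem_cons.mp hy with rfl | hy'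
        · exact absurd rfl h
        · obtain ⟨t', ht', hl⟩ := ih hy' (by simpa using hlen)
          refine ⟨t', by simp [ht'], ?_⟩
          have hb : (y == v) = false := beq_eq_false_iff_ne.mpr h
          simp only [List.zip_cons_cons, List.lookup, hb]
          exact hl

lemma subst_wf_aux {N X L : Type} [DecidableEq X] (sce : SCE N X L)
    (V : List X) (TN : List (TName N X))
    (hlen : TN.length = V.length)
    (hTN : ∀ t ∈ TN, IsGround t ∧ WFT sce t) :
    ∀ u : TName N X, WFT sce u → (∀ y : X, Occurs y u → y ∈ V) →
      IsGround (substT V TN u) ∧ WFT sce (substT V TN u) := by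
  intro u
  induction u using TName.rec
    (motive_2 := fun l => ∀ u ∈ l, WFT sce u → (∀ y : X, Occurs y u → y ∈ V) →
      IsGround (substT V TN u) ∧ WFT sce (substT V TN u)) with
  | var y =>
    intro _ hocc
    obtain ⟨t, htmem, hl⟩ := lookup_zip_mem (hocc y Occurs.var) hlen
    have := hTN t htmem
    simp [substT, hl, this]
  | gen nm args ihargs =>
    intro hwf hocc
    rcases hwf with _ | ⟨sc, hsc, hlen', hargs⟩
    rw [substT]
    constructor
    · refine IsGround.gen ?_
      intro t ht
      simp only [List.mem_map, List.mem_attach, true_and] at ht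
      obtain ⟨⟨a, ha⟩, rfl⟩ := ht
      exact (ihargs a ha (hargs a ha) (fun y hy => hocc y (Occurs.arg ha hy))).1
    · refine WFT.gen sc hsc (by simpa using hlen') ?_
      intro t ht
      simp only [List.mem_map, List.mem_attach, true_and] at ht
      obtain ⟨⟨a, ha⟩, rfl⟩ := ht
      exact (ihargs a ha (hargs a ha) (fun y hy => hocc y (Occurs.arg ha hy))).2
  | nil =>
    rename_i u hu _ _
    simp at hu
  | cons a l iha ihl =>
    rename_i u hu hwf hocc
    rcases List.mem_cons.mp hu with rfl | hu'
    · exact iha hwf hocc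
    · exact ihl u hu' hwf hocc

/-- Name substitution preserves well-formedness: substituting the
type variables of a well-formed generic signature name by ground signature
names well-formed in `sce` yields a ground signature name well-formed in
`sce`. -/
theorem subst_preserves_wf {N X L : Type} [DecidableEq X] (sce : SCE N X L)
    (nm : N) (args : List (TName N X)) (V : List X) (TN : List (TName N X))
    (hwf : WFT sce (TName.gen nm args))
    (hocc : ∀ y : X, Occurs y (TName.gen nm args) → y ∈ V)
    (hnd : V.Nodup) (hlen : TN.length = V.length)
    (hTN : ∀ t ∈ TN, IsGround t ∧ WFT sce t) :
    IsGround (substT V TN (TName.gen nm args)) ∧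
      WFT sce (substT V TN (TName.gen nm args)) := by
  exact subst_wf_aux sce V TN hlen hTN _ hwf hocc
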